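/- arXiv:1909.12587 — 4 statements merged into one kernel-verified Lean document; each statement's English description precedes it below -/
import Mathlib

section
/- Let n ≥ 2 be an integer. For all real numbers a, b with b ≥ 0 and a ≤ b, one has |a - b|^n ≥ b^n - n b^{n-1} a + |a|^n. -/
theorem stmt_1 (n : ℕ) (hn : 2 ≤ n) (a b : ℝ) (hb : 0 ≤ b) (hab : a - b ≤ 0) :
    |a - b| ^ n ≥ b ^ n - n * b ^ (n - 1) * a + |a| ^ n := by
  have hab' : a ≤ b := by linarith
  have habs : |a - b| = b - a := by
    rw [abs_of_nonpos hab]; ring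
  rw [habs]
  induction n, hn using Nat.le_induction with
  | base =>
    have h := sq_abs a
    norm_num
    nlinarith [sq_abs a]
  | succ m hm ih =>
    obtain ⟨k, rfl⟩ : ∃ k, m = k + 2 := ⟨m - 2, by omega⟩
    have ih' : (b - a) ^ (k + 2) ≥
        b ^ (k + 2) - (k + 2 : ℕ) * b ^ (k + 2 - 1) * a + |a| ^ (k + 2) := ih
    simp only [Nat.add_sub_cancel] at ih' ⊢
    push_cast at ih' ⊢
    have hba : (0:ℝ) ≤ b - a := by linarith
    have h1 : (b - a) ^ (k + 3) = (b - a) * (b - a) ^ (k + 2) := by ring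
    have h2 : (b - a) * (b - a) ^ (k + 2) ≥
        (b - a) * (b ^ (k + 2) - (k + 2 : ℝ) * b ^ (k + 1) * a + |a| ^ (k + 2)) :=
      mul_le_mul_of_nonneg_left ih' hba
    have h3 : (b - a) * (b ^ (k + 2) - (k + 2 : ℝ) * b ^ (k + 1) * a + |a| ^ (k + 2)) ≥
        b ^ (k + 3) - (k + 3 : ℝ) * b ^ (k + 2) * a + |a| ^ (k + 3) := by
      have hbk : (0:ℝ) ≤ b ^ (k + 1) := pow_nonneg hb _
      rcases le_or_gt a 0 with ha | ha
      · have habsa : |a| = -a := abs_of_nonpos ha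
        rw [habsa]
        have hA : (0:ℝ) ≤ (-a) ^ (k + 2) := pow_nonneg (by linarith) _
        have hdiff : (b - a) * (b ^ (k + 2) - (k + 2 : ℝ) * b ^ (k + 1) * a + (-a) ^ (k + 2))
            - (b ^ (k + 3) - (k + 3 : ℝ) * b ^ (k + 2) * a + (-a) ^ (k + 3))
            = ((k : ℝ) + 2) * (b ^ (k + 1) * a ^ 2) + b * (-a) ^ (k + 2) := by ring
        have h4 : (0:ℝ) ≤ ((k : ℝ) + 2) * (b ^ (k + 1) * a ^ 2) :=
          mul_nonneg (by positivity) (mul_nonneg hbk (sq_nonneg a))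
        have h5 : (0:ℝ) ≤ b * (-a) ^ (k + 2) := mul_nonneg hb hA
        linarith
      · have habsa : |a| = a := abs_of_pos ha
        rw [habsa]
        have hpow : a ^ (k + 1) * a ^ 2 ≤ b ^ (k + 1) * a ^ 2 :=
          mul_le_mul_of_nonneg_right (pow_le_pow_left₀ ha.le hab' _) (sq_nonneg a)
        have hpow2 : ((k : ℝ) + 2) * (a ^ (k + 1) * a ^ 2) ≤ ((k : ℝ) + 2) * (b ^ (k + 1) * a ^ 2) :=
          mul_le_mul_of_nonneg_left hpow (by positivity)
        have hk3 : (0:ℝ) ≤ (k : ℝ) * (a ^ (k + 1) * a ^ 2) :=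
          mul_nonneg (by positivity) (mul_nonneg (pow_nonneg ha.le _) (sq_nonneg a))
        have hb5 : (0:ℝ) ≤ b * a ^ (k + 2) := mul_nonneg hb (pow_nonneg ha.le _)
        have hdiff : (b - a) * (b ^ (k + 2) - (k + 2 : ℝ) * b ^ (k + 1) * a + a ^ (k + 2))
            - (b ^ (k + 3) - (k + 3 : ℝ) * b ^ (k + 2) * a + a ^ (k + 3))
            = ((k : ℝ) + 2) * (b ^ (k + 1) * a ^ 2) + b * a ^ (k + 2)
              - 2 * (a ^ (k + 1) * a ^ 2) := by ring
        linarith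
    linarith [h2, h3, h1.ge]
end

section
/- Let n ≥ 2 and let Φ : (0,1) → ℝ be a C¹ function with Φ ≥ 0 and Φ' ≥ 0 on (0,1). Then for any non-increasing function v ∈ C¹₀([0,1)) (i.e. v is C¹, v(t) = 0 for t near 1, and v' ≤ 0) with v ≥ 0, one has ∫₀¹ |v'(t)|^n t^{n-1} Φ(t) dt ≥ ∫₀¹ v(t)^n Φ'(t) (-ln t)^{1-n} dt. -/
open MeasureTheory Set

theorem stmt_2 (n : ℕ) (hn : 2 ≤ n) (Φ Φ' : ℝ → ℝ)
    (hΦderiv : ∀ t ∈ Ioo (0 : ℝ) 1, HasDerivAt Φ (Φ' t) t)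
    (hΦcont : ContinuousOn Φ' (Ioo 0 1))
    (hΦ0 : ∀ t ∈ Ioo (0 : ℝ) 1, 0 ≤ Φ t)
    (hΦ'0 : ∀ t ∈ Ioo (0 : ℝ) 1, 0 ≤ Φ' t)
    (v : ℝ → ℝ) (hv : ContDiff ℝ 1 v)
    (hvsupp : ∃ b : ℝ, b < 1 ∧ ∀ t, b ≤ t → v t = 0)
    (hv0 : ∀ t ∈ Ico (0 : ℝ) 1, 0 ≤ v t)
    (hv' : ∀ t ∈ Ico (0 : ℝ) 1, deriv v t ≤ 0) :
    ∫ t in Ioo (0 : ℝ) 1, |deriv v t| ^ n * t ^ (n - 1) * Φ t ≥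
      ∫ t in Ioo (0 : ℝ) 1, v t ^ n * Φ' t / (-Real.log t) ^ (n - 1) := by
  obtain ⟨b, hb1, hb0⟩ := hvsupp
  -- basic continuity facts
  have hvc : Continuous v := hv.continuous
  have hdc : Continuous (deriv v) := hv.continuous_deriv le_rfl
  have hΦc : ContinuousOn Φ (Ioo 0 1) := fun t ht => (hΦderiv t ht).continuousAt.continuousWithinAt
  -- monotonicity of Φ
  have hΦmono : ∀ x y : ℝ, 0 < x → x ≤ y → y < 1 → Φ x ≤ Φ y := by
    intro x y hx hxy hy1
    have hsub : Icc x y ⊆ Ioo (0:ℝ) 1 := fun u hu => ⟨lt_of_lt_of_le hx hu.1, lt_of_le_of_lt hu.2 hy1⟩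
    have huIcc : uIcc x y = Icc x y := uIcc_of_le hxy
    have hftc : ∫ u in x..y, Φ' u = Φ y - Φ x := by
      apply intervalIntegral.integral_eq_sub_of_hasDerivAt
      · intro u hu; exact hΦderiv u (hsub (huIcc ▸ hu))
      · exact (hΦcont.mono (huIcc ▸ hsub)).intervalIntegrable
    have : 0 ≤ ∫ u in x..y, Φ' u :=
      intervalIntegral.integral_nonneg hxy (fun u hu => hΦ'0 u (hsub hu))
    linarith [hftc ▸ this]
  -- support constant
  set c : ℝ := max b (1/2) with hc_def
  have hc0 : (0:ℝ) < c := lt_of_lt_of_le one_half_pos (le_max_right _ _)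
  have hc1 : c < 1 := max_lt hb1 (by norm_num)
  have hvc0 : ∀ t, c ≤ t → v t = 0 := fun t ht => hb0 t (le_trans (le_max_left _ _) ht)
  have hdc0 : ∀ t, c < t → deriv v t = 0 := by
    intro t htc
    have hev : v =ᶠ[nhds t] (fun _ => (0:ℝ)) := by
      filter_upwards [isOpen_Ioi.mem_nhds htc] with s hs
      exact hvc0 s (le_of_lt hs)
    rw [hev.deriv_eq, deriv_const]
  -- numeric facts
  have hn0 : (n:ℝ) ≠ 0 := by positivity
  have hn1 : (1:ℝ) < n := by exact_mod_cast hn.trans_lt' one_lt_two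
  -- main functions
  set F : ℝ → ENNReal := fun s => ENNReal.ofReal (|deriv v s| ^ n * s ^ (n - 1)) with hF_def
  have hF_meas : Measurable F := by
    apply ENNReal.measurable_ofReal.comp
    exact ((hdc.abs.pow n).mul (continuous_pow (n-1))).measurable
  set G : ℝ → ENNReal := fun t => ∫⁻ s in Ioo t 1, F s with hG_def
  -- Step A : Hölder
  have hvd : Differentiable ℝ v := hv.differentiable one_ne_zero
  have hv1 : v 1 = 0 := hb0 1 hb1.le
  have stepA : ∀ t ∈ Ioo (0:ℝ) 1,
      ENNReal.ofReal (v t) ^ n ≤ G t * ENNReal.ofReal (-Real.log t) ^ (n - 1) := by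
    intro t ht
    obtain ⟨ht0, ht1⟩ := ht
    have hnpos : (0:ℝ) < n := by positivity
    have hn1 : (1:ℝ) < n := by exact_mod_cast hn.trans_lt' one_lt_two
    have hm : ((n - 1 : ℕ) : ℝ) = (n:ℝ) - 1 := by
      rw [Nat.cast_sub (by omega)]; norm_num
    have hmpos : (0:ℝ) < ((n-1:ℕ):ℝ) := by rw [hm]; linarith
    -- v t as integral of |deriv v|
    have h0 : v t = ∫ s in Ioo t 1, |deriv v s| := by
      have hftc : ∫ s in t..1, deriv v s = v 1 - v t :=
        intervalIntegral.integral_deriv_eq_sub (fun x _ => hvd x) (hdc.intervalIntegrable _ _)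
      have h2 : ∫ s in Ioo t 1, |deriv v s| = ∫ s in Ioo t 1, -deriv v s := by
        apply setIntegral_congr_fun measurableSet_Ioo
        intro s hs
        exact abs_of_nonpos (hv' s ⟨(ht0.trans hs.1).le, hs.2⟩)
      rw [h2, integral_neg, ← integral_Ioc_eq_integral_Ioo,
        ← intervalIntegral.integral_of_le ht1.le, hftc, hv1]
      ring
    have h1 : ENNReal.ofReal (v t) = ∫⁻ s in Ioo t 1, ENNReal.ofReal |deriv v s| := by
      rw [h0]
      apply ofReal_integral_eq_lintegral_ofReal
      · exact ((hdc.abs.integrableOn_Icc (a := t) (b := 1))).mono_set Ioo_subset_Icc_self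
      · exact Filter.Eventually.of_forall fun s => abs_nonneg _
    -- Hölder setup
    set p : ℝ := (n:ℝ) with hp_def
    set q : ℝ := (n:ℝ)/((n:ℝ)-1) with hq_def
    have hq0 : 0 ≤ q := div_nonneg hnpos.le (by linarith)
    have hpq : p.HolderConjugate q := Real.HolderConjugate.conjExponent hn1
    set e : ℝ := ((n-1:ℕ):ℝ)/n with he_def
    have he0 : 0 ≤ e := div_nonneg hmpos.le hnpos.le
    have hep : e * p = ((n-1:ℕ):ℝ) := by
      rw [he_def, hp_def]; field_simp
    have heq1 : e * q = 1 := by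
      simp only [he_def, hq_def, hm, hp_def]; field_simp; exact div_self (by linarith)
    have heq : -e * q = -1 := by rw [neg_mul, heq1]
    set a : ℝ → ENNReal := fun s => ENNReal.ofReal (|deriv v s| * s ^ e) with ha_def
    set bf : ℝ → ENNReal := fun s => ENNReal.ofReal (s ^ (-e)) with hb_def
    have ha_meas : Measurable a :=
      ENNReal.measurable_ofReal.comp ((hdc.abs.measurable).mul (measurable_id.pow_const e))
    have hb_meas : Measurable bf :=
      ENNReal.measurable_ofReal.comp (measurable_id.pow_const (-e))
    have hmem := ae_restrict_mem (μ := volume) (s := Ioo t 1) measurableSet_Ioo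
    have hab : ∀ᵐ s ∂(volume.restrict (Ioo t 1)), ENNReal.ofReal |deriv v s| = (a * bf) s := by
      filter_upwards [hmem] with s hs
      have hs0 : 0 < s := ht0.trans hs.1
      simp only [ha_def, hb_def, Pi.mul_apply]
      rw [← ENNReal.ofReal_mul (by positivity), mul_assoc, ← Real.rpow_add hs0]
      simp
    have hap : ∀ᵐ s ∂(volume.restrict (Ioo t 1)),
        a s ^ p = ENNReal.ofReal (|deriv v s| ^ n * s ^ (n - 1)) := by
      filter_upwards [hmem] with s hs
      have hs0 : 0 < s := ht0.trans hs.1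
      calc a s ^ p = ENNReal.ofReal ((|deriv v s| * s ^ e) ^ p) := by
            rw [ha_def, ENNReal.ofReal_rpow_of_nonneg (by positivity) (by positivity)]
        _ = ENNReal.ofReal (|deriv v s| ^ p * s ^ (e * p)) := by
            rw [Real.mul_rpow (abs_nonneg _) (Real.rpow_nonneg hs0.le _), ← Real.rpow_mul hs0.le]
        _ = ENNReal.ofReal (|deriv v s| ^ n * s ^ (n - 1)) := by
            rw [hep, Real.rpow_natCast, Real.rpow_natCast]
    have hbq : ∀ᵐ s ∂(volume.restrict (Ioo t 1)), bf s ^ q = ENNReal.ofReal s⁻¹ := by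
      filter_upwards [hmem] with s hs
      have hs0 : 0 < s := ht0.trans hs.1
      rw [hb_def, ENNReal.ofReal_rpow_of_nonneg (Real.rpow_nonneg hs0.le _) hq0,
        ← Real.rpow_mul hs0.le, heq, Real.rpow_neg_one]
    have hIb : ∫⁻ s in Ioo t 1, ENNReal.ofReal s⁻¹ = ENNReal.ofReal (-Real.log t) := by
      have hint : IntegrableOn (fun s : ℝ => s⁻¹) (Ioo t 1) := by
        apply (ContinuousOn.integrableOn_Icc _).mono_set Ioo_subset_Icc_self
        exact continuousOn_id.inv₀ fun s hs => ne_of_gt (lt_of_lt_of_le ht0 hs.1)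
      have hval : ∫ s in Ioo t 1, s⁻¹ = -Real.log t := by
        rw [← integral_Ioc_eq_integral_Ioo, ← intervalIntegral.integral_of_le ht1.le,
          integral_inv_of_pos ht0 one_pos, one_div, Real.log_inv]
      rw [← hval]
      refine (ofReal_integral_eq_lintegral_ofReal hint ?_).symm
      filter_upwards [hmem] with s hs
      exact inv_nonneg.2 (ht0.trans hs.1).le
    -- Hölder
    have hHolder := ENNReal.lintegral_mul_le_Lp_mul_Lq (volume.restrict (Ioo t 1)) hpq
      ha_meas.aemeasurable hb_meas.aemeasurable
    rw [← lintegral_congr_ae hab, ← h1, lintegral_congr_ae hap, lintegral_congr_ae hbq, hIb]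
      at hHolder
    -- raise to power p
    set X : ENNReal := ∫⁻ s in Ioo t 1, ENNReal.ofReal (|deriv v s| ^ n * s ^ (n - 1)) with hX_def
    set Y : ENNReal := ENNReal.ofReal (-Real.log t) with hY_def
    have key : ENNReal.ofReal (v t) ^ p ≤ (X ^ (1/p) * Y ^ (1/q)) ^ p :=
      ENNReal.rpow_le_rpow hHolder (by positivity)
    rw [ENNReal.mul_rpow_of_nonneg _ _ (by positivity), ← ENNReal.rpow_mul, ← ENNReal.rpow_mul,
      one_div_mul_cancel (by positivity)] at key
    have hqp : 1/q * p = ((n - 1 : ℕ) : ℝ) := by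
      rw [hq_def, hp_def, hm]
      field_simp
      rw [hp_def]
    rw [hqp, ENNReal.rpow_one, ENNReal.rpow_natCast, ENNReal.rpow_natCast] at key
    exact key
  -- measurable version of Φ'
  have hg_aem : AEMeasurable (fun t => ENNReal.ofReal (Φ' t)) (volume.restrict (Ioo (0:ℝ) 1)) :=
    ENNReal.measurable_ofReal.comp_aemeasurable (hΦcont.aemeasurable measurableSet_Ioo)
  -- Step A' : pointwise bound for RHS integrand
  have stepA' : ∀ t ∈ Ioo (0:ℝ) 1,
      ENNReal.ofReal (v t ^ n * Φ' t / (-Real.log t) ^ (n - 1)) ≤ ENNReal.ofReal (Φ' t) * G t := by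
    intro t ht
    have hA := stepA t ht
    have hL : 0 < -Real.log t := by
      have := Real.log_neg ht.1 ht.2; linarith
    have hvt : 0 ≤ v t := hv0 t ⟨ht.1.le, ht.2⟩
    have hC : (0:ℝ) < (-Real.log t) ^ (n - 1) := by positivity
    rw [ENNReal.ofReal_div_of_pos hC, ENNReal.ofReal_mul (by positivity),
      ENNReal.ofReal_pow hvt, ENNReal.ofReal_pow hL.le]
    rw [ENNReal.div_le_iff (pow_ne_zero _ (ne_of_gt (ENNReal.ofReal_pos.2 hL))) (ENNReal.pow_ne_top ENNReal.ofReal_ne_top)]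
    calc ENNReal.ofReal (v t) ^ n * ENNReal.ofReal (Φ' t)
        ≤ (G t * ENNReal.ofReal (-Real.log t) ^ (n - 1)) * ENNReal.ofReal (Φ' t) :=
          mul_le_mul_left hA _
      _ = ENNReal.ofReal (Φ' t) * G t * ENNReal.ofReal (-Real.log t) ^ (n - 1) := by ring
  -- Step B : Tonelli and FTC bound
  have stepB : ∫⁻ t in Ioo (0:ℝ) 1, ENNReal.ofReal (Φ' t) * G t ≤
      ∫⁻ s in Ioo (0:ℝ) 1, F s * ENNReal.ofReal (Φ s) := by
    have hg_aem : AEMeasurable (fun t => ENNReal.ofReal (Φ' t)) (volume.restrict (Ioo (0:ℝ) 1)) :=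
      ENNReal.measurable_ofReal.comp_aemeasurable (hΦcont.aemeasurable measurableSet_Ioo)
    set gm : ℝ → ENNReal := hg_aem.mk _ with hgm_def
    have hgm_meas : Measurable gm := hg_aem.measurable_mk
    have hgg : (fun t => ENNReal.ofReal (Φ' t)) =ᵐ[volume.restrict (Ioo (0:ℝ) 1)] gm :=
      hg_aem.ae_eq_mk
    have hmem := ae_restrict_mem (μ := volume) (s := Ioo (0:ℝ) 1) measurableSet_Ioo
    -- the kernel
    set k : ℝ × ℝ → ENNReal :=
      fun p => gm p.1 * F p.2 * ({q : ℝ × ℝ | q.1 < q.2}.indicator 1 p) with hk_def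
    have hk_meas : Measurable k := by
      apply Measurable.mul
      · exact (hgm_meas.comp measurable_fst).mul (hF_meas.comp measurable_snd)
      · exact measurable_const.indicator (measurableSet_lt measurable_fst measurable_snd)
    -- step 1: rewrite outer integral
    have e1 : ∫⁻ t in Ioo (0:ℝ) 1, ENNReal.ofReal (Φ' t) * (∫⁻ s in Ioo t 1, F s) =
        ∫⁻ t in Ioo (0:ℝ) 1, ∫⁻ s in Ioo (0:ℝ) 1, k (t, s) := by
      have : ∀ᵐ t ∂(volume.restrict (Ioo (0:ℝ) 1)),
          ENNReal.ofReal (Φ' t) * (∫⁻ s in Ioo t 1, F s) = ∫⁻ s in Ioo (0:ℝ) 1, k (t, s) := by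
        filter_upwards [hmem, hgg] with t ht hgt
        have hG : (∫⁻ s in Ioo t 1, F s) = ∫⁻ s in Ioo (0:ℝ) 1, (Ioi t).indicator F s := by
          have hset : Ioi t ∩ Ioo 0 1 = Ioo t 1 := by
            ext x
            constructor
            · rintro ⟨h1, h2⟩; exact ⟨h1, h2.2⟩
            · rintro ⟨h1, h2⟩; exact ⟨h1, ht.1.trans h1, h2⟩
          rw [lintegral_indicator measurableSet_Ioi, Measure.restrict_restrict measurableSet_Ioi,
            hset]
        rw [hgt, hG, ← lintegral_const_mul _ (hF_meas.indicator measurableSet_Ioi)]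
        apply lintegral_congr
        intro s
        by_cases hts : t < s
        · simp [hk_def, Set.indicator_of_mem, hts, Set.indicator_of_mem (show (t,s) ∈ {q : ℝ × ℝ | q.1 < q.2} from hts)]
        · simp [hk_def, Set.indicator_of_notMem, hts, Set.indicator_of_notMem (show (t,s) ∉ {q : ℝ × ℝ | q.1 < q.2} from hts)]
      exact lintegral_congr_ae this
    -- step 2: swap
    have e2 : ∫⁻ t in Ioo (0:ℝ) 1, ∫⁻ s in Ioo (0:ℝ) 1, k (t, s) =
        ∫⁻ s in Ioo (0:ℝ) 1, ∫⁻ t in Ioo (0:ℝ) 1, k (t, s) :=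
      lintegral_lintegral_swap (hk_meas.aemeasurable)
    -- FTC bound
    have ftc : ∀ s ∈ Ioo (0:ℝ) 1, ∫⁻ t in Ioo 0 s, gm t ≤ ENNReal.ofReal (Φ s) := by
      intro s hs
      set u : ℕ → ℝ := fun j => s / (j + 2) with hu_def
      have hu0 : ∀ j, 0 < u j := fun j => div_pos hs.1 (by positivity)
      have hus : ∀ j, u j < s := by
        intro j
        rw [hu_def, div_lt_iff₀ (by positivity)]
        nlinarith [hs.1]
      have hbound : ∀ j, ∫⁻ t in Ioo (u j) s, gm t ≤ ENNReal.ofReal (Φ s) := by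
        intro j
        have hIsub : Icc (u j) s ⊆ Ioo (0:ℝ) 1 :=
          fun x hx => ⟨lt_of_lt_of_le (hu0 j) hx.1, lt_of_le_of_lt hx.2 hs.2⟩
        have hOsub : Ioo (u j) s ⊆ Ioo (0:ℝ) 1 := Ioo_subset_Icc_self.trans hIsub
        have hae : gm =ᶠ[ae (volume.restrict (Ioo (u j) s))] (fun t => ENNReal.ofReal (Φ' t)) := by
          filter_upwards [ae_restrict_of_ae_restrict_of_subset hOsub hgg] with x hx
          exact hx.symm
        have heq : ∫⁻ t in Ioo (u j) s, gm t = ∫⁻ t in Ioo (u j) s, ENNReal.ofReal (Φ' t) :=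
          lintegral_congr_ae hae
        have hint : IntegrableOn Φ' (Ioo (u j) s) :=
          ((hΦcont.mono hIsub).integrableOn_Icc).mono_set Ioo_subset_Icc_self
        have hval : ∫ t in Ioo (u j) s, Φ' t = Φ s - Φ (u j) := by
          rw [← integral_Ioc_eq_integral_Ioo, ← intervalIntegral.integral_of_le (hus j).le]
          apply intervalIntegral.integral_eq_sub_of_hasDerivAt
          · intro x hx
            rw [uIcc_of_le (hus j).le] at hx
            exact hΦderiv x (hIsub hx)
          · rw [intervalIntegrable_iff_integrableOn_Ioc_of_le (hus j).le]
            exact ((hΦcont.mono hIsub).integrableOn_Icc).mono_set Ioc_subset_Icc_self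
        have hnn : 0 ≤ᶠ[ae (volume.restrict (Ioo (u j) s))] Φ' := by
          filter_upwards [ae_restrict_mem measurableSet_Ioo] with x hx
          exact hΦ'0 x (hOsub hx)
        rw [heq, ← ofReal_integral_eq_lintegral_ofReal hint hnn, hval]
        apply ENNReal.ofReal_le_ofReal
        have := hΦ0 (u j) ⟨hu0 j, (hus j).trans hs.2⟩
        linarith
      -- monotone convergence
      have hmono : Monotone (fun j => (Ioo (u j) s).indicator gm) := by
        intro i j hij
        apply indicator_le_indicator_of_subset _ (fun x => zero_le)
        apply Ioo_subset_Ioo_left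
        apply div_le_div_of_nonneg_left hs.1.le (by positivity)
        have := (Nat.cast_le (α := ℝ)).2 hij
        linarith
      have hsup : ∀ x, ⨆ j, (Ioo (u j) s).indicator gm x = (Ioo 0 s).indicator gm x := by
        intro x
        by_cases hx : x ∈ Ioo 0 s
        · rw [Set.indicator_of_mem hx]
          apply le_antisymm
          · exact iSup_le fun j => (Set.indicator_le_self' (fun _ _ => zero_le) x)
          · obtain ⟨j, hj⟩ := exists_nat_gt (s / x)
            have hjx : u j < x := by
              rw [hu_def, div_lt_iff₀ (by positivity)]
              have : s / x < (j:ℝ) + 2 := by linarith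
              rw [div_lt_iff₀ hx.1] at this
              linarith
            have : (Ioo (u j) s).indicator gm x = gm x :=
              Set.indicator_of_mem (show x ∈ Ioo (u j) s from ⟨hjx, hx.2⟩) _
            rw [← this]
            exact le_iSup (fun j => (Ioo (u j) s).indicator gm x) j
        · rw [Set.indicator_of_notMem hx]
          apply le_antisymm _ zero_le
          apply iSup_le
          intro j
          apply le_of_eq
          apply Set.indicator_of_notMem
          intro hmem'
          exact hx ⟨(hu0 j).trans hmem'.1, hmem'.2⟩
      calc ∫⁻ t in Ioo 0 s, gm t = ∫⁻ t, (Ioo 0 s).indicator gm t :=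
            (lintegral_indicator measurableSet_Ioo _).symm
        _ = ∫⁻ t, ⨆ j, (Ioo (u j) s).indicator gm t := by
            apply lintegral_congr; intro x; rw [hsup]
        _ = ⨆ j, ∫⁻ t, (Ioo (u j) s).indicator gm t :=
            lintegral_iSup (fun j => hgm_meas.indicator measurableSet_Ioo) hmono
        _ ≤ ENNReal.ofReal (Φ s) := by
            apply iSup_le
            intro j
            rw [lintegral_indicator measurableSet_Ioo]
            exact hbound j
    -- step 3: inner integral bound
    have e3 : ∫⁻ s in Ioo (0:ℝ) 1, ∫⁻ t in Ioo (0:ℝ) 1, k (t, s) ≤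
        ∫⁻ s in Ioo (0:ℝ) 1, F s * ENNReal.ofReal (Φ s) := by
      apply lintegral_mono_ae
      filter_upwards [hmem] with s hs
      have hinner : ∫⁻ t in Ioo (0:ℝ) 1, k (t, s) = F s * ∫⁻ t in Ioo 0 s, gm t := by
        have : ∀ t, k (t, s) = F s * ((Iio s).indicator gm t) := by
          intro t
          by_cases hts : t < s
          · simp [hk_def, Set.indicator_of_mem (show t ∈ Iio s from hts),
              Set.indicator_of_mem (show (t,s) ∈ {q : ℝ × ℝ | q.1 < q.2} from hts)]
            ring
          · simp [hk_def, Set.indicator_of_notMem (show t ∉ Iio s from hts),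
              Set.indicator_of_notMem (show (t,s) ∉ {q : ℝ × ℝ | q.1 < q.2} from hts)]
        rw [lintegral_congr (fun t => this t),
          lintegral_const_mul _ (hgm_meas.indicator measurableSet_Iio),
          lintegral_indicator measurableSet_Iio, Measure.restrict_restrict measurableSet_Iio]
        have hset2 : Iio s ∩ Ioo 0 1 = Ioo 0 s := by
          ext x
          constructor
          · rintro ⟨h1, h2⟩; exact ⟨h2.1, h1⟩
          · rintro ⟨h1, h2⟩; exact ⟨h2, h1, h2.trans hs.2⟩
        rw [hset2]
      rw [hinner]
      exact mul_le_mul_right (ftc s hs) (F s)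
    rw [e1, e2]
    exact e3
  have stepC : ∫⁻ s in Ioo (0:ℝ) 1, F s * ENNReal.ofReal (Φ s) =
      ∫⁻ s in Ioo (0:ℝ) 1, ENNReal.ofReal (|deriv v s| ^ n * s ^ (n - 1) * Φ s) := by
    apply lintegral_congr_ae
    filter_upwards [ae_restrict_mem measurableSet_Ioo] with s hs
    have hs0 : (0:ℝ) ≤ s := hs.1.le
    simp only [hF_def]
    rw [← ENNReal.ofReal_mul (by positivity)]
  -- Step D : finiteness of LHS lintegral
  have stepD : (∫⁻ s in Ioo (0:ℝ) 1, ENNReal.ofReal (|deriv v s| ^ n * s ^ (n - 1) * Φ s)) < ⊤ := by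
    obtain ⟨K, hK⟩ := isCompact_Icc.exists_bound_of_continuousOn (s := Icc (0:ℝ) c) hdc.continuousOn
    have hK0 : 0 ≤ K := le_trans (norm_nonneg _) (hK 0 ⟨le_rfl, hc0.le⟩)
    set c' : ℝ := (c+1)/2 with hc'_def
    have hcc' : c ≤ c' := by simp only [hc'_def]; linarith
    have hc'1 : c' < 1 := by simp only [hc'_def]; linarith
    have hc'0 : 0 < c' := lt_of_lt_of_le hc0 hcc'
    have hΦc'0 : 0 ≤ Φ c' := hΦ0 c' ⟨hc'0, hc'1⟩
    set C : ℝ := K ^ n * Φ c' with hC_def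
    have hC0 : 0 ≤ C := mul_nonneg (pow_nonneg hK0 n) hΦc'0
    have hpt : ∀ t ∈ Ioo (0:ℝ) 1, |deriv v t| ^ n * t ^ (n - 1) * Φ t ≤ C := by
      intro t ht
      rcases le_or_gt t c with h | h
      · have h1 : |deriv v t| ≤ K := by
          have := hK t ⟨ht.1.le, h⟩; rwa [Real.norm_eq_abs] at this
        have h2 : t ^ (n-1) ≤ 1 := pow_le_one₀ ht.1.le ht.2.le
        have h3 : Φ t ≤ Φ c' := hΦmono t c' ht.1 (h.trans hcc') hc'1
        have h4 : 0 ≤ Φ t := hΦ0 t ht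
        calc |deriv v t| ^ n * t ^ (n - 1) * Φ t ≤ K ^ n * 1 * Φ c' := by
              apply mul_le_mul _ h3 h4 (mul_nonneg (pow_nonneg hK0 n) zero_le_one)
              apply mul_le_mul (pow_le_pow_left₀ (abs_nonneg _) h1 n) h2 (pow_nonneg ht.1.le _) (pow_nonneg hK0 n)
          _ = C := by ring
      · rw [hdc0 t h]
        simp only [abs_zero]
        rw [zero_pow (by omega)]
        simpa using hC0
    calc (∫⁻ s in Ioo (0:ℝ) 1, ENNReal.ofReal (|deriv v s| ^ n * s ^ (n - 1) * Φ s))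
        ≤ ∫⁻ _ in Ioo (0:ℝ) 1, ENNReal.ofReal C := by
          apply lintegral_mono_ae
          filter_upwards [ae_restrict_mem measurableSet_Ioo] with t ht
          exact ENNReal.ofReal_le_ofReal (hpt t ht)
      _ = ENNReal.ofReal C * volume (Ioo (0:ℝ) 1) := setLIntegral_const _ _
      _ < ⊤ := ENNReal.mul_lt_top ENNReal.ofReal_lt_top measure_Ioo_lt_top
  -- conversions
  have hRHSm : AEStronglyMeasurable (fun t => v t ^ n * Φ' t / (-Real.log t) ^ (n - 1))
      (volume.restrict (Ioo (0:ℝ) 1)) := by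
    apply ContinuousOn.aestronglyMeasurable _ measurableSet_Ioo
    apply ContinuousOn.div
    · exact ((hvc.pow n).continuousOn).mul hΦcont
    · exact ((Real.continuousOn_log.mono (fun t ht => by simp [ne_of_gt ht.1])).neg).pow _
    · intro t ht
      have h3 : Real.log t < 0 := Real.log_neg ht.1 ht.2
      have : (0:ℝ) < -Real.log t := by linarith
      positivity
  have hRHS0 : 0 ≤ᶠ[ae (volume.restrict (Ioo (0:ℝ) 1))]
      (fun t => v t ^ n * Φ' t / (-Real.log t) ^ (n - 1)) := by
    filter_upwards [ae_restrict_mem measurableSet_Ioo] with t ht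
    have h1 : 0 ≤ v t := hv0 t ⟨ht.1.le, ht.2⟩
    have h2 : 0 ≤ Φ' t := hΦ'0 t ht
    have h3 : Real.log t < 0 := Real.log_neg ht.1 ht.2
    have : (0:ℝ) < -Real.log t := by linarith
    positivity
  have hLHSm : AEStronglyMeasurable (fun t => |deriv v t| ^ n * t ^ (n - 1) * Φ t)
      (volume.restrict (Ioo (0:ℝ) 1)) := by
    apply ContinuousOn.aestronglyMeasurable _ measurableSet_Ioo
    exact (((hdc.abs.pow n).mul (continuous_pow (n-1))).continuousOn).mul hΦc
  have hLHS0 : 0 ≤ᶠ[ae (volume.restrict (Ioo (0:ℝ) 1))]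
      (fun t => |deriv v t| ^ n * t ^ (n - 1) * Φ t) := by
    filter_upwards [ae_restrict_mem measurableSet_Ioo] with t ht
    have := hΦ0 t ht
    have h1 : (0:ℝ) ≤ t := ht.1.le
    positivity
  rw [ge_iff_le, integral_eq_lintegral_of_nonneg_ae hRHS0 hRHSm,
    integral_eq_lintegral_of_nonneg_ae hLHS0 hLHSm]
  apply ENNReal.toReal_mono stepD.ne
  calc ∫⁻ t in Ioo (0:ℝ) 1, ENNReal.ofReal (v t ^ n * Φ' t / (-Real.log t) ^ (n - 1))
      ≤ ∫⁻ t in Ioo (0:ℝ) 1, ENNReal.ofReal (Φ' t) * G t := by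
        apply lintegral_mono_ae
        filter_upwards [ae_restrict_mem measurableSet_Ioo] with t ht
        exact stepA' t ht
    _ ≤ ∫⁻ s in Ioo (0:ℝ) 1, F s * ENNReal.ofReal (Φ s) := stepB
    _ = _ := stepC
end

section
/- Let n ≥ 2 and write v(t) = w(t)(-ln t) for t ∈ (0,1), where w is C¹ and w ≥ 0, and suppose v'(t) ≤ 0. Then |v'(t)|^n ≥ w(t)^n / t^n + n w(t)^{n-1} w'(t) (ln t) / t^{n-1} + |w'(t)|^n (-ln t)^n for all t ∈ (0,1). -/
open Set

lemma key_ineq : ∀ (m : ℕ), 1 ≤ m → ∀ a b : ℝ, 0 ≤ a → b ≤ a →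
    a ^ (m+1) - ((m:ℝ)+1) * a ^ m * b + |b| ^ (m+1) ≤ (a - b) ^ (m+1) := by
  intro m hm
  induction m, hm using Nat.le_induction with
  | base =>
    intro a b ha hab
    have h : |b| ^ 2 = b ^ 2 := sq_abs b
    push_cast
    nlinarith [sq_abs b]
  | succ m hm ih =>
    intro a b ha hab
    have h1 := ih a b ha hab
    have hba : 0 ≤ a - b := by linarith
    have h2 : (a - b) * (a ^ (m+1) - ((m:ℝ)+1) * a ^ m * b + |b| ^ (m+1))
        ≤ (a - b) * (a - b) ^ (m+1) := mul_le_mul_of_nonneg_left h1 hba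
    have habs : 0 ≤ |b| := abs_nonneg b
    have key2 : |b| ^ (m+2) ≤ a * |b| ^ (m+1) + ((m:ℝ)+1) * a ^ m * b ^ 2 - b * |b| ^ (m+1) := by
      rcases le_or_gt 0 b with hb | hb
      · rw [abs_of_nonneg hb]
        have e1 : b ^ (m+2) = b ^ m * b ^ 2 := by rw [pow_add]
        have e2 : b ^ (m+1) = b ^ m * b := pow_succ b m
        rw [e1, e2]
        have hbm : b ^ m ≤ a ^ m := pow_le_pow_left₀ hb hab m
        have hb2 : (0:ℝ) ≤ b ^ 2 := sq_nonneg b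
        have h3 : b ^ m * b ^ 2 ≤ a ^ m * b ^ 2 := mul_le_mul_of_nonneg_right hbm hb2
        have h4 : b * (b ^ m * b) ≤ a * (b ^ m * b) :=
          mul_le_mul_of_nonneg_right hab (mul_nonneg (pow_nonneg hb m) hb)
        have h5 : 0 ≤ (m:ℝ) * (a ^ m * b ^ 2) := by positivity
        nlinarith [h3, h4, h5]
      · rw [abs_of_neg hb]
        have hc : 0 < -b := by linarith
        have e1 : (-b) ^ (m+2) = (-b) ^ (m+1) * (-b) := pow_succ (-b) (m+1)
        have h5 : 0 ≤ a * (-b) ^ (m+1) := mul_nonneg ha (pow_nonneg hc.le _)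
        have h6 : 0 ≤ ((m:ℝ)+1) * (a ^ m * b ^ 2) := by positivity
        nlinarith [h5, h6, e1]
    have hexp : (a - b) * (a - b) ^ (m+1) = (a - b) ^ (m+2) := by
      rw [← pow_succ']
    have hexp2 : (a - b) * (a ^ (m+1) - ((m:ℝ)+1) * a ^ m * b + |b| ^ (m+1))
        = a ^ (m+2) - ((m:ℝ)+2) * a ^ (m+1) * b + a * |b| ^ (m+1)
          + ((m:ℝ)+1) * a ^ m * b ^ 2 - b * |b| ^ (m+1) := by ring
    have e3 : m + 1 + 1 = m + 2 := rfl
    rw [e3]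
    push_cast
    linarith [h2, key2, hexp, hexp2]

theorem stmt_3 (n : ℕ) (hn : 2 ≤ n) (w w' : ℝ → ℝ)
    (hw : ∀ t ∈ Ioo (0 : ℝ) 1, HasDerivAt w (w' t) t)
    (hwcont : ContinuousOn w' (Ioo 0 1))
    (hw0 : ∀ t ∈ Ioo (0 : ℝ) 1, 0 ≤ w t)
    (hv' : ∀ t ∈ Ioo (0 : ℝ) 1, w' t * (-Real.log t) - w t / t ≤ 0) :
    ∀ t ∈ Ioo (0 : ℝ) 1,
      |w' t * (-Real.log t) - w t / t| ^ n ≥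
        w t ^ n / t ^ n + n * w t ^ (n - 1) * w' t * Real.log t / t ^ (n - 1) +
          |w' t| ^ n * (-Real.log t) ^ n := by
  intro t ht
  obtain ⟨ht0, ht1⟩ := ht
  have hlog : 0 < -Real.log t := by
    have := Real.log_neg ht0 ht1; linarith
  have ha : 0 ≤ w t / t := div_nonneg (hw0 t ⟨ht0, ht1⟩) ht0.le
  have hab : w' t * (-Real.log t) ≤ w t / t := by
    have := hv' t ⟨ht0, ht1⟩; linarith
  obtain ⟨m, rfl⟩ : ∃ m, n = m + 1 := ⟨n - 1, by omega⟩
  have hm : 1 ≤ m := by omega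
  have hkey := key_ineq m hm (w t / t) (w' t * (-Real.log t)) ha hab
  have habs : |w' t * (-Real.log t) - w t / t| = w t / t - w' t * (-Real.log t) := by
    rw [abs_sub_comm]; exact abs_of_nonneg (by linarith)
  rw [ge_iff_le, habs]
  have hbabs : |w' t * (-Real.log t)| ^ (m+1) = |w' t| ^ (m+1) * (-Real.log t) ^ (m+1) := by
    rw [abs_mul, abs_of_pos hlog, mul_pow]
  rw [hbabs] at hkey
  have ht0' : t ≠ 0 := ne_of_gt ht0
  have heq : w t ^ (m+1) / t ^ (m+1) + (↑(m+1) : ℝ) * w t ^ (m+1-1) * w' t * Real.log t / t ^ (m+1-1)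
      + |w' t| ^ (m+1) * (-Real.log t) ^ (m+1)
      = (w t / t) ^ (m+1) - ((m:ℝ)+1) * (w t / t) ^ m * (w' t * (-Real.log t))
        + |w' t| ^ (m+1) * (-Real.log t) ^ (m+1) := by
    simp only [Nat.add_sub_cancel]
    push_cast
    rw [div_pow, div_pow]
    field_simp
    ring
  rw [heq]
  exact hkey
end

section
/- Let n ≥ 2 and set ψ(x) = (-ln |x|)^{(n-1)/n} for x in the punctured unit ball of ℝⁿ. Then ψ is a smooth positive supersolution of the equation -Δ_n ψ = V ψ^{n-1} in 𝔹ⁿ \ {0}, where V(x) = (2(n-1)/n)^n (1-|x|²)^{-n}; namely, -Δ_n ψ(x) - V(x) ψ(x)^{n-1} = ((n-1)/n)^n (ψ(x)^{n-1}/|x|^n) ( (-ln |x|)^{-n} - (2|x|/(1-|x|²))^n ) > 0 for all x ∈ 𝔹ⁿ with 0 < |x| < 1. -/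
open MeasureTheory Metric Real Filter Topology Set

variable {n : ℕ}

local notation "E" => EuclideanSpace ℝ (Fin n)

lemma hasFDerivAt_norm' (y : EuclideanSpace ℝ (Fin n)) (hy : y ≠ 0) :
    HasFDerivAt (fun z : E => ‖z‖) (‖y‖⁻¹ • innerSL ℝ y) y := by
  have hys : ‖y‖ ^ 2 ≠ 0 := pow_ne_zero 2 (norm_ne_zero_iff.mpr hy)
  have h1 : HasFDerivAt (fun z : E => ‖z‖ ^ 2) (2 • innerSL ℝ y) y :=
    (hasStrictFDerivAt_norm_sq y).hasFDerivAt
  have h2 := h1.sqrt hys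
  have heq : (fun z : E => Real.sqrt (‖z‖ ^ 2)) = fun z : E => ‖z‖ :=
    funext fun z => Real.sqrt_sq (norm_nonneg z)
  rw [heq] at h2
  have hy' : ‖y‖ ≠ 0 := norm_ne_zero_iff.mpr hy
  exact h2.congr_fderiv (by ext v; simp [Real.sqrt_sq (norm_nonneg y)]; field_simp)

lemma gradient_psi (α : ℝ) (y : EuclideanSpace ℝ (Fin n)) (h0 : 0 < ‖y‖) (h1 : ‖y‖ < 1) :
    gradient (fun z : E => (-Real.log ‖z‖) ^ α) y
      = ((α * (-Real.log ‖y‖) ^ (α - 1)) * -(‖y‖⁻¹ * ‖y‖⁻¹)) • y := by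
  have hy : y ≠ 0 := norm_pos_iff.mp h0
  have hL : 0 < -Real.log ‖y‖ := by
    simpa using Real.log_neg h0 h1
  have hlog : HasDerivAt (fun t : ℝ => -Real.log t) (-(‖y‖⁻¹)) ‖y‖ :=
    (Real.hasDerivAt_log (ne_of_gt h0)).neg
  have hrpow : HasDerivAt (fun u : ℝ => u ^ α) (α * (-Real.log ‖y‖) ^ (α - 1))
      (-Real.log ‖y‖) :=
    Real.hasDerivAt_rpow_const (Or.inl (ne_of_gt hL))
  have hφ : HasDerivAt (fun t : ℝ => (-Real.log t) ^ α)
      ((α * (-Real.log ‖y‖) ^ (α - 1)) * -(‖y‖⁻¹)) ‖y‖ :=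
    HasDerivAt.comp (h₂ := fun u : ℝ => u ^ α) ‖y‖ hrpow hlog
  have hψ : HasFDerivAt (fun z : E => (-Real.log ‖z‖) ^ α)
      (((α * (-Real.log ‖y‖) ^ (α - 1)) * -(‖y‖⁻¹)) • (‖y‖⁻¹ • innerSL ℝ y)) y :=
    hφ.comp_hasFDerivAt y (hasFDerivAt_norm' y hy)
  have hgrad : HasGradientAt (fun z : E => (-Real.log ‖z‖) ^ α)
      (((α * (-Real.log ‖y‖) ^ (α - 1)) * -(‖y‖⁻¹ * ‖y‖⁻¹)) • y) y := by
    rw [hasGradientAt_iff_hasFDerivAt]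
    refine hψ.congr_fderiv ?_
    ext v
    simp [InnerProductSpace.toDual_apply_apply, real_inner_smul_left]
    ring
  exact hgrad.gradient

lemma scalar_flux (hn : 2 ≤ n) (r L : ℝ) (hr : 0 < r) (hL : 0 < L) :
    (|(((n:ℝ)-1)/n * L ^ ((((n:ℝ)-1)/n) - 1)) * -(r⁻¹ * r⁻¹)| * r) ^ (n-2) *
        ((((n:ℝ)-1)/n * L ^ ((((n:ℝ)-1)/n) - 1)) * -(r⁻¹ * r⁻¹))
      = -((((n:ℝ)-1)/n)^(n-1) * L ^ (-(((n:ℝ)-1)/n)) / r^n) := by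
  set α : ℝ := ((n:ℝ)-1)/n with hαdef
  have hn0 : (n:ℝ) ≠ 0 := by positivity
  have hα : 0 < α := by
    apply div_pos _ (by positivity)
    have : (2:ℝ) ≤ (n:ℝ) := by exact_mod_cast hn
    linarith
  have hLp : 0 < L ^ (α - 1) := Real.rpow_pos_of_pos hL _
  have hrne : r ≠ 0 := ne_of_gt hr
  have habs : |(α * L ^ (α-1)) * -(r⁻¹ * r⁻¹)| = α * L^(α-1) * (r⁻¹ * r⁻¹) := by
    have h : (α * L ^ (α-1)) * -(r⁻¹ * r⁻¹) = -((α * L^(α-1)) * (r⁻¹ * r⁻¹)) := by ring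
    rw [h, abs_neg, abs_of_pos (by positivity)]
  rw [habs]
  have h1 : α * L^(α-1) * (r⁻¹ * r⁻¹) * r = α * L^(α-1) * r⁻¹ := by
    field_simp
  rw [h1]
  have hexp : (L^(α-1))^(n-1) = L^(-α) := by
    rw [← Real.rpow_natCast (L^(α-1)) (n-1), ← Real.rpow_mul hL.le]
    congr 1
    have hc : ((n-1:ℕ):ℝ) = (n:ℝ) - 1 := by
      push_cast [Nat.cast_sub (by omega : 1 ≤ n)]; ring
    rw [hc, hαdef]
    field_simp
    ring
  have key : (α * L^(α-1) * r⁻¹)^(n-2) * (α * L^(α-1) * r⁻¹) * r⁻¹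
      = α^(n-1) * L^(-α) * (r^n)⁻¹ := by
    rw [← pow_succ]
    have h2 : n - 2 + 1 = n - 1 := by omega
    rw [h2, mul_pow, mul_pow, hexp, ← inv_pow]
    have h3 : (r⁻¹)^(n-1) * r⁻¹ = (r⁻¹)^n := by
      rw [← pow_succ]; congr 1; omega
    rw [mul_assoc, mul_assoc, h3] -- goal: α^(n-1) * (L^(-α) * (r⁻¹)^n) = ...
    rw [inv_pow]
    ring
  calc (α * L^(α-1) * r⁻¹) ^ (n-2) * ((α * L ^ (α-1)) * -(r⁻¹ * r⁻¹))
      = -((α * L^(α-1) * r⁻¹)^(n-2) * (α * L^(α-1) * r⁻¹) * r⁻¹) := by ring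
    _ = -(α^(n-1) * L^(-α) * (r^n)⁻¹) := by rw [key]
    _ = -(α^(n-1) * L^(-α) / r^n) := by rw [div_eq_mul_inv]

lemma key_log_ineq (r : ℝ) (h0 : 0 < r) (h1 : r < 1) :
    2 * r * (-Real.log r) < 1 - r ^ 2 := by
  set G : ℝ → ℝ := fun t => 1 - t ^ 2 + 2 * t * Real.log t with hG
  have hderiv : ∀ t ∈ Ioo r 1, HasDerivAt G (2 * (1 - t + Real.log t)) t := by
    intro t ht
    have ht0 : 0 < t := lt_trans h0 ht.1
    have h1' : HasDerivAt (fun t : ℝ => 1 - t ^ 2) (-(2 * t)) t := by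
      simpa using ((hasDerivAt_pow 2 t).const_sub 1)
    have h2' : HasDerivAt (fun t : ℝ => 2 * t * Real.log t)
        (2 * Real.log t + 2 * t * t⁻¹) t := by
      have := ((hasDerivAt_id t).const_mul 2).mul (Real.hasDerivAt_log (ne_of_gt ht0))
      exact this.congr_deriv (by simp)
    have := h1'.add h2'
    have harr : -(2*t) + (2 * Real.log t + 2 * t * t⁻¹) = 2 * (1 - t + Real.log t) := by
      field_simp
      ring
    rw [harr] at this
    exact this
  have hcont : ContinuousOn G (Icc r 1) := by
    apply ContinuousOn.add
    · fun_prop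
    · apply ContinuousOn.mul (by fun_prop)
      apply Real.continuousOn_log.mono
      intro t ht
      simp only [mem_compl_iff, mem_singleton_iff]
      exact ne_of_gt (lt_of_lt_of_le h0 ht.1)
  have hanti : StrictAntiOn G (Icc r 1) := by
    apply strictAntiOn_of_deriv_neg (convex_Icc r 1) hcont
    intro t ht
    rw [interior_Icc] at ht
    rw [(hderiv t ht).deriv]
    have ht0 : 0 < t := lt_trans h0 ht.1
    have := Real.log_lt_sub_one_of_pos ht0 (ne_of_lt ht.2)
    linarith
  have := hanti (left_mem_Icc.mpr h1.le) (right_mem_Icc.mpr h1.le) h1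
  simp only [hG] at this
  have hG1 : (1:ℝ) - 1 ^ 2 + 2 * 1 * Real.log 1 = 0 := by simp
  nlinarith [this]

lemma scalar_lap (hn : 2 ≤ n) (α r L : ℝ) (hr : 0 < r) (hL : 0 < L) :
    (n:ℝ) * (-(α^(n-1) * (L^(-α) / r^n)))
      + (-(α^(n-1) * (((-α) * L^(-α-1) * -(r⁻¹) * r^n - L^(-α) * ((n:ℝ) * r^(n-1))) / (r^n)^2))) * r
    = -(α^n * (L^(-α-1) / r^n)) := by
  have hRne : r^(n-1) ≠ 0 := pow_ne_zero _ hr.ne'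
  have hrne : r ≠ 0 := hr.ne'
  have hLne : L ≠ 0 := hL.ne'
  have hPne : L^(-α) ≠ 0 := (Real.rpow_pos_of_pos hL _).ne'
  have hR : r^n = r^(n-1) * r := by
    rw [← pow_succ]; congr 1; omega
  have hα : α^n = α^(n-1) * α := by
    rw [← pow_succ]; congr 1; omega
  have hL2 : L^(-α-1) = L^(-α) / L := by
    rw [show -α-1 = -α - 1 by ring, Real.rpow_sub hL, Real.rpow_one]
  rw [hR, hα, hL2]
  field_simp
  ring

lemma final_alg (hn : 2 ≤ n) (r L : ℝ) (hr : 0 < r) (hr1 : r < 1) (hL : 0 < L) :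
    (((n:ℝ)-1)/n)^n * (L ^ (-(((n:ℝ)-1)/n) - 1) / r^n)
      - (2 * ((n : ℝ) - 1) / n) ^ n * (1 - r ^ 2) ^ (-(n : ℝ)) *
          (L ^ (((n : ℝ) - 1) / n)) ^ (n - 1)
    = (((n : ℝ) - 1) / n) ^ n * ((L ^ (((n : ℝ) - 1) / n)) ^ (n - 1) / r ^ n) *
        (1 / L ^ n - (2 * r / (1 - r ^ 2)) ^ n) := by
  set α : ℝ := ((n:ℝ)-1)/n with hαdef
  have hn0 : (n:ℝ) ≠ 0 := by positivity
  have hq : 0 < 1 - r^2 := by nlinarith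
  have hA : (L^α)^(n-1) = L^(α*((n:ℝ)-1)) := by
    rw [← Real.rpow_natCast (L^α) (n-1), ← Real.rpow_mul hL.le]
    congr 1
    have hc : ((n-1:ℕ):ℝ) = (n:ℝ) - 1 := by
      push_cast [Nat.cast_sub (by omega : 1 ≤ n)]; ring
    rw [hc]
  have hE : L^(-α-1) = L^(α*((n:ℝ)-1)) / L^n := by
    rw [← Real.rpow_natCast L n, ← Real.rpow_sub hL]
    congr 1
    rw [hαdef]
    field_simp
    ring
  have hQ : (1-r^2)^(-(n:ℝ)) = ((1-r^2)^n)⁻¹ := by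
    rw [Real.rpow_neg hq.le, Real.rpow_natCast]
  have h2α : (2*((n:ℝ)-1)/n)^n = 2^n * α^n := by
    rw [← mul_pow]; congr 1; rw [hαdef]; ring
  have hdiv : (2*r/(1-r^2))^n = 2^n * r^n / (1-r^2)^n := by
    rw [div_pow, mul_pow]
  rw [hA, hE, hQ, h2α, hdiv]
  have hAp : (0:ℝ) < L^(α*((n:ℝ)-1)) := Real.rpow_pos_of_pos hL _
  have h1 : L^n ≠ 0 := pow_ne_zero _ hL.ne'
  have h2 : r^n ≠ 0 := pow_ne_zero _ hr.ne'
  have h3 : (1-r^2)^n ≠ 0 := pow_ne_zero _ hq.ne'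
  field_simp

lemma final_pos (hn : 2 ≤ n) (r L : ℝ) (hr : 0 < r) (hr1 : r < 1) (hL : 0 < L)
    (hkey : 2 * r * L < 1 - r ^ 2) :
    0 < (((n : ℝ) - 1) / n) ^ n * ((L ^ (((n : ℝ) - 1) / n)) ^ (n - 1) / r ^ n) *
        (1 / L ^ n - (2 * r / (1 - r ^ 2)) ^ n) := by
  have hq : 0 < 1 - r^2 := by nlinarith
  have hα : (0:ℝ) < ((n:ℝ)-1)/n := by
    have : (2:ℝ) ≤ (n:ℝ) := by exact_mod_cast hn
    apply div_pos <;> linarith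
  have hLr : (0:ℝ) < L ^ (((n:ℝ)-1)/n) := Real.rpow_pos_of_pos hL _
  have hfac : 0 < (((n : ℝ) - 1) / n) ^ n * ((L ^ (((n : ℝ) - 1) / n)) ^ (n - 1) / r ^ n) := by
    positivity
  apply mul_pos hfac
  rw [sub_pos]
  have hlt : 2 * r / (1 - r^2) < 1 / L := by
    rw [div_lt_div_iff₀ hq hL]
    nlinarith
  have := pow_lt_pow_left₀ hlt (by positivity) (by omega : n ≠ 0)
  calc (2 * r / (1 - r ^ 2)) ^ n < (1/L)^n := this
    _ = 1 / L ^ n := by rw [div_pow, one_pow]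

/-- The `n`-Laplacian `Δ_n ψ = div(|∇ψ|^{n-2} ∇ψ)` on Euclidean space. -/
noncomputable def nLaplacian (n : ℕ) (ψ : EuclideanSpace ℝ (Fin n) → ℝ)
    (x : EuclideanSpace ℝ (Fin n)) : ℝ :=
  ∑ i : Fin n,
    fderiv ℝ (fun y => ‖gradient ψ y‖ ^ (n - 2) * gradient ψ y i) x
      (EuclideanSpace.single i 1)

lemma nLap_eval (hn : 2 ≤ n) (x : EuclideanSpace ℝ (Fin n))
    (hx0 : 0 < ‖x‖) (hx1 : ‖x‖ < 1) :
    nLaplacian n (fun y => (-Real.log ‖y‖) ^ (((n : ℝ) - 1) / n)) x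
      = -((((n:ℝ)-1)/n)^n *
          ((-Real.log ‖x‖) ^ (-((((n:ℝ)-1)/n)) - 1) / ‖x‖^n)) := by
  set α : ℝ := ((n:ℝ)-1)/n with hαdef
  have hxne : x ≠ 0 := norm_pos_iff.mp hx0
  have hL : 0 < -Real.log ‖x‖ := by simpa using Real.log_neg hx0 hx1
  -- the coefficient function K
  set K : E → ℝ := fun y => -(α^(n-1) * ((-Real.log ‖y‖) ^ (-α) / ‖y‖^n)) with hKdef
  -- Step 1: eventual equality of the flux with K y * y i
  have hUopen : IsOpen {y : E | 0 < ‖y‖ ∧ ‖y‖ < 1} := by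
    have : {y : E | 0 < ‖y‖ ∧ ‖y‖ < 1} = Metric.ball (0:E) 1 ∩ {(0:E)}ᶜ := by
      ext y
      simp [mem_ball_zero_iff, norm_pos_iff, and_comm, Set.mem_compl_iff]
    rw [this]
    exact Metric.isOpen_ball.inter isClosed_singleton.isOpen_compl
  have hUmem : ∀ᶠ y in 𝓝 x, 0 < ‖y‖ ∧ ‖y‖ < 1 :=
    hUopen.eventually_mem ⟨hx0, hx1⟩
  have hflux : ∀ i : Fin n,
      (fun y : E => ‖gradient (fun z : E => (-Real.log ‖z‖) ^ α) y‖ ^ (n - 2) *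
        gradient (fun z : E => (-Real.log ‖z‖) ^ α) y i)
      =ᶠ[𝓝 x] fun y => K y * y i := by
    intro i
    filter_upwards [hUmem] with y hy
    obtain ⟨hy0, hy1⟩ := hy
    have hLy : 0 < -Real.log ‖y‖ := by simpa using Real.log_neg hy0 hy1
    rw [gradient_psi α y hy0 hy1]
    have hsmul : (((α * (-Real.log ‖y‖) ^ (α - 1)) * -(‖y‖⁻¹ * ‖y‖⁻¹)) • y) i
        = ((α * (-Real.log ‖y‖) ^ (α - 1)) * -(‖y‖⁻¹ * ‖y‖⁻¹)) * y i := rfl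
    rw [hsmul, norm_smul]
    rw [Real.norm_eq_abs]
    have := scalar_flux hn ‖y‖ (-Real.log ‖y‖) hy0 hLy
    rw [hKdef]
    simp only [← hαdef] at this ⊢
    calc (|α * (-Real.log ‖y‖) ^ (α - 1) * -(‖y‖⁻¹ * ‖y‖⁻¹)| * ‖y‖) ^ (n - 2) *
          (α * (-Real.log ‖y‖) ^ (α - 1) * -(‖y‖⁻¹ * ‖y‖⁻¹) * y i)
        = ((|α * (-Real.log ‖y‖) ^ (α - 1) * -(‖y‖⁻¹ * ‖y‖⁻¹)| * ‖y‖) ^ (n - 2) *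
          (α * (-Real.log ‖y‖) ^ (α - 1) * -(‖y‖⁻¹ * ‖y‖⁻¹))) * y i := by ring
      _ = -(α ^ (n - 1) * (-Real.log ‖y‖) ^ (-α) / ‖y‖ ^ n) * y i := by rw [this]
      _ = -(α ^ (n - 1) * ((-Real.log ‖y‖) ^ (-α) / ‖y‖ ^ n)) * y i := by
          rw [mul_div_assoc]
  -- Step 2: derivative of K
  set κ' : ℝ := -(α^(n-1) * (((-α) * (-Real.log ‖x‖)^(-α-1) * -(‖x‖⁻¹) * ‖x‖^n -
      (-Real.log ‖x‖)^(-α) * ((n:ℝ) * ‖x‖^(n-1))) / (‖x‖^n)^2)) with hκ'def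
  have hK : HasFDerivAt K (κ' • (‖x‖⁻¹ • innerSL ℝ x)) x := by
    have hf : HasDerivAt (fun t : ℝ => (-Real.log t) ^ (-α))
        ((-α) * (-Real.log ‖x‖)^(-α-1) * -(‖x‖⁻¹)) ‖x‖ := by
      have hlog : HasDerivAt (fun t : ℝ => -Real.log t) (-(‖x‖⁻¹)) ‖x‖ :=
        (Real.hasDerivAt_log hx0.ne').neg
      have hrpow : HasDerivAt (fun u : ℝ => u ^ (-α))
          ((-α) * (-Real.log ‖x‖) ^ (-α - 1)) (-Real.log ‖x‖) :=
        Real.hasDerivAt_rpow_const (Or.inl hL.ne')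
      exact HasDerivAt.comp ‖x‖ hrpow hlog
    have hg : HasDerivAt (fun t : ℝ => t ^ n) ((n:ℝ) * ‖x‖^(n-1)) ‖x‖ :=
      hasDerivAt_pow n ‖x‖
    have hdiv := hf.div hg (pow_ne_zero n hx0.ne')
    have hκ := (hdiv.const_mul (α^(n-1))).neg
    exact HasDerivAt.comp_hasFDerivAt
      (h₂ := fun t : ℝ => -(α ^ (n-1) * ((-Real.log t) ^ (-α) / t ^ n)))
      x hκ (hasFDerivAt_norm' x hxne)
  -- Step 3: fderiv of each component
  have hcomp : ∀ i : Fin n,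
      fderiv ℝ (fun y : E => ‖gradient (fun z : E => (-Real.log ‖z‖) ^ α) y‖ ^ (n - 2) *
        gradient (fun z : E => (-Real.log ‖z‖) ^ α) y i) x (EuclideanSpace.single i 1)
      = K x * 1 + x i * (κ' * (‖x‖⁻¹ * (x i))) := by
    intro i
    have hproj : HasFDerivAt (fun y : E => y i) (EuclideanSpace.proj (𝕜 := ℝ) i) x :=
      (EuclideanSpace.proj (𝕜 := ℝ) i).hasFDerivAt
    have hGi : HasFDerivAt (fun y : E => K y * y i) _ x := hK.mul hproj
    rw [(hflux i).fderiv_eq, hGi.fderiv]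
    simp [EuclideanSpace.inner_single_right, real_inner_smul_left, mul_comm]
  -- Step 4: sum up
  rw [nLaplacian, Finset.sum_congr rfl (fun i _ => hcomp i)]
  rw [Finset.sum_add_distrib, Finset.sum_const, Finset.card_univ, Fintype.card_fin]
  have hsum2 : ∑ i : Fin n, x i * (κ' * (‖x‖⁻¹ * x i)) = (κ' * ‖x‖⁻¹) * ∑ i : Fin n, x i * x i := by
    rw [Finset.mul_sum]; apply Finset.sum_congr rfl; intros; ring
  have hsum3 : ∑ i : Fin n, x i * x i = ‖x‖ ^ 2 := by
    rw [EuclideanSpace.norm_eq, Real.sq_sqrt (by positivity)]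
    exact Finset.sum_congr rfl fun i _ => by rw [Real.norm_eq_abs, sq_abs, sq]
  rw [hsum2, hsum3, nsmul_eq_mul, mul_one]
  have h4 : (κ' * ‖x‖⁻¹) * ‖x‖ ^ 2 = κ' * ‖x‖ := by
    field_simp
  rw [h4]
  simp only [hKdef, hκ'def]
  exact scalar_lap hn α ‖x‖ (-Real.log ‖x‖) hx0 hL


theorem stmt_5 (n : ℕ) (hn : 2 ≤ n) :
    ∀ x : EuclideanSpace ℝ (Fin n), 0 < ‖x‖ → ‖x‖ < 1 →
      (-nLaplacian n (fun y => (-Real.log ‖y‖) ^ (((n : ℝ) - 1) / n)) x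
          - (2 * ((n : ℝ) - 1) / n) ^ n * (1 - ‖x‖ ^ 2) ^ (-(n : ℝ)) *
              ((-Real.log ‖x‖) ^ (((n : ℝ) - 1) / n)) ^ (n - 1)
        = (((n : ℝ) - 1) / n) ^ n *
            (((-Real.log ‖x‖) ^ (((n : ℝ) - 1) / n)) ^ (n - 1) / ‖x‖ ^ n) *
            (1 / (-Real.log ‖x‖) ^ n - (2 * ‖x‖ / (1 - ‖x‖ ^ 2)) ^ n)) ∧
      0 < -nLaplacian n (fun y => (-Real.log ‖y‖) ^ (((n : ℝ) - 1) / n)) x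
            - (2 * ((n : ℝ) - 1) / n) ^ n * (1 - ‖x‖ ^ 2) ^ (-(n : ℝ)) *
                ((-Real.log ‖x‖) ^ (((n : ℝ) - 1) / n)) ^ (n - 1) := by
  intro x hx0 hx1
  have hL : 0 < -Real.log ‖x‖ := by simpa using Real.log_neg hx0 hx1
  have hnl := nLap_eval hn x hx0 hx1
  have hkey := key_log_ineq ‖x‖ hx0 hx1
  have halg := final_alg hn ‖x‖ (-Real.log ‖x‖) hx0 hx1 hL
  constructor
  · rw [hnl, neg_neg]
    exact halg
  · rw [hnl, neg_neg, halg]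
    exact final_pos hn ‖x‖ (-Real.log ‖x‖) hx0 hx1 hL hkey
end
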